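/- Fix complex numbers y, y', w, z and suppose Ź = wI + (1−4yy')Z + 2y'X and Z̃ = zI − Z are invertible. Let μ̃ : ℂ → ℂ be any function whose complex derivative at every point x is exp((w+z)x + (w²+z²)y + y'x²). Define F̃(x) = μ̃(x)·(1 − 2y'·aᵀŹ⁻¹Z̃⁻¹b) + exp((w+z)x + (w²+z²)y + y'x²)·aᵀŹ⁻¹(xI+2yZ−X)⁻¹Z̃⁻¹b. Then at every complex x for which xI + 2yZ − X is invertible, F̃ has complex derivative equal to exp((w+z)x + (w²+z²)y + y'x²) · (1 + aᵀŹ⁻¹(xI+2yZ−X)⁻¹b) · (1 + aᵀ(xI+2yZ−X)⁻¹Z̃⁻¹b), which is the product ψ*_𝒳(x,y,y',w)·ψ_𝒳(x,y,z)·e^{y'x²} of the x-adjoint wave function, the wave function, and the weight e^{y'x²}. -/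

import Mathlib

open Matrix

attribute [local instance] Matrix.linftyOpNormedAddCommGroup Matrix.linftyOpNormedRing
  Matrix.linftyOpNormedAlgebra

/-- The linear functional `M ↦ u ⬝ᵥ M *ᵥ v` on matrices. -/
noncomputable def dotL {N : ℕ} (u v : Fin N → ℂ) : Matrix (Fin N) (Fin N) ℂ →ₗ[ℂ] ℂ where
  toFun M := u ⬝ᵥ M.mulVec v
  map_add' M M' := by simp [Matrix.add_mulVec, dotProduct_add]
  map_smul' c M := by simp [Matrix.smul_mulVec, dotProduct_smul]

lemma hasDerivAt_inv_matrix {N : ℕ} (A : Matrix (Fin N) (Fin N) ℂ) (x : ℂ)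
    (h : IsUnit (x • (1 : Matrix (Fin N) (Fin N) ℂ) + A)) :
    HasDerivAt (fun ξ : ℂ => (ξ • (1 : Matrix (Fin N) (Fin N) ℂ) + A)⁻¹)
      (-((x • (1 : Matrix (Fin N) (Fin N) ℂ) + A)⁻¹ *
        (x • (1 : Matrix (Fin N) (Fin N) ℂ) + A)⁻¹)) x := by
  have h1 : HasDerivAt (fun ξ : ℂ => ξ • (1 : Matrix (Fin N) (Fin N) ℂ) + A)
      (1 : Matrix (Fin N) (Fin N) ℂ) x := by
    have := ((hasDerivAt_id' x).smul_const (1 : Matrix (Fin N) (Fin N) ℂ)).add_const A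
    rwa [one_smul] at this
  have h2 := (hasFDerivAt_ringInverse (𝕜 := ℂ) h.unit).comp_hasDerivAt x
      (f := fun ξ : ℂ => ξ • (1 : Matrix (Fin N) (Fin N) ℂ) + A)
      (by exact h1)
  have hinv : ((h.unit⁻¹ : _) : Matrix (Fin N) (Fin N) ℂ)
      = (x • (1 : Matrix (Fin N) (Fin N) ℂ) + A)⁻¹ := by
    rw [Matrix.nonsing_inv_eq_ringInverse]
    have h3 := Ring.inverse_unit h.unit
    rw [h.unit_spec] at h3
    exact h3.symm
  have hfun : (Ring.inverse ∘ fun ξ : ℂ => ξ • (1 : Matrix (Fin N) (Fin N) ℂ) + A)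
      = fun ξ : ℂ => (ξ • (1 : Matrix (Fin N) (Fin N) ℂ) + A)⁻¹ := by
    funext ξ; simp [Function.comp, Matrix.nonsing_inv_eq_ringInverse]
  rw [hfun] at h2
  convert h2 using 1
  rotate_right
  simp [hinv]
  all_goals rfl

lemma vecMulVec_mulVec' {N : ℕ} (b a v : Fin N → ℂ) :
    (Matrix.vecMulVec b a).mulVec v = (a ⬝ᵥ v) • b := by
  funext i
  simp only [Matrix.mulVec, Matrix.vecMulVec_apply, dotProduct, Pi.smul_apply,
    smul_eq_mul, Finset.sum_mul]
  exact Finset.sum_congr rfl fun j _ => by ring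

lemma split_dot {N : ℕ} (M K : Matrix (Fin N) (Fin N) ℂ) (a b : Fin N → ℂ) :
    a ⬝ᵥ (M * Matrix.vecMulVec b a * K).mulVec b
      = (a ⬝ᵥ M.mulVec b) * (a ⬝ᵥ K.mulVec b) := by
  rw [← Matrix.mulVec_mulVec, ← Matrix.mulVec_mulVec, vecMulVec_mulVec',
    Matrix.mulVec_smul, dotProduct_smul]
  rw [smul_eq_mul, mul_comm]

/-- The explicit function
`F̃(x) = μ̃(x)·(1 − 2y'·aᵀŹ⁻¹Z̃⁻¹b) + exp((w+z)x+(w²+z²)y+y'x²)·aᵀŹ⁻¹X̃⁻¹Z̃⁻¹b`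
is an antiderivative in `x` of the product `ψ*_𝒳(x,y,y',w)·ψ_𝒳(x,y,z)·e^{y'x²}`
of the x-adjoint wave function, the wave function, and the weight, at every `x`
where `xI + 2yZ − X` is invertible. -/
theorem antiderivative_wave_xadjoint_product {N : ℕ} (hN : 0 < N)
    (X Z : Matrix (Fin N) (Fin N) ℂ) (a b : Fin N → ℂ)
    (hrank : X * Z - Z * X - 1 = Matrix.vecMulVec b a)
    (y y' w z : ℂ)
    (hZ1 : IsUnit (w • (1 : Matrix (Fin N) (Fin N) ℂ) + (1 - 4 * y * y') • Z + (2 * y') • X))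
    (hZ2 : IsUnit (z • (1 : Matrix (Fin N) (Fin N) ℂ) - Z))
    (μ : ℂ → ℂ)
    (hμ : ∀ x : ℂ, HasDerivAt μ
      (Complex.exp ((w + z) * x + (w ^ 2 + z ^ 2) * y + y' * x ^ 2)) x) :
    ∀ x : ℂ, IsUnit (x • (1 : Matrix (Fin N) (Fin N) ℂ) + (2 * y) • Z - X) →
      HasDerivAt
        (fun ξ : ℂ =>
          μ ξ * (1 - 2 * y' *
              (a ⬝ᵥ ((w • (1 : Matrix (Fin N) (Fin N) ℂ) + (1 - 4 * y * y') • Z + (2 * y') • X)⁻¹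
                * (z • 1 - Z)⁻¹).mulVec b))
          + Complex.exp ((w + z) * ξ + (w ^ 2 + z ^ 2) * y + y' * ξ ^ 2) *
              (a ⬝ᵥ ((w • (1 : Matrix (Fin N) (Fin N) ℂ) + (1 - 4 * y * y') • Z + (2 * y') • X)⁻¹
                * (ξ • 1 + (2 * y) • Z - X)⁻¹ * (z • 1 - Z)⁻¹).mulVec b))
        (Complex.exp ((w + z) * x + (w ^ 2 + z ^ 2) * y + y' * x ^ 2) *
          (1 + a ⬝ᵥ ((w • (1 : Matrix (Fin N) (Fin N) ℂ) + (1 - 4 * y * y') • Z + (2 * y') • X)⁻¹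
              * (x • 1 + (2 * y) • Z - X)⁻¹).mulVec b) *
          (1 + a ⬝ᵥ ((x • (1 : Matrix (Fin N) (Fin N) ℂ) + (2 * y) • Z - X)⁻¹
              * (z • 1 - Z)⁻¹).mulVec b))
        x := by
  intro x hx
  simp only [add_sub_assoc] at hx ⊢
  set V : Matrix (Fin N) (Fin N) ℂ := Matrix.vecMulVec b a with hV
  set Zp : Matrix (Fin N) (Fin N) ℂ :=
    w • (1 : Matrix (Fin N) (Fin N) ℂ) + (1 - 4 * y * y') • Z + (2 * y') • X with hZpdef
  set Zt : Matrix (Fin N) (Fin N) ℂ := z • (1 : Matrix (Fin N) (Fin N) ℂ) - Z with hZtdef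
  set A : Matrix (Fin N) (Fin N) ℂ := (2 * y) • Z - X with hAdef
  set P : Matrix (Fin N) (Fin N) ℂ := Zp⁻¹ with hPdef
  set Q : Matrix (Fin N) (Fin N) ℂ := Zt⁻¹ with hQdef
  set Xt : Matrix (Fin N) (Fin N) ℂ := x • (1 : Matrix (Fin N) (Fin N) ℂ) + A with hXtdef
  set R : Matrix (Fin N) (Fin N) ℂ := Xt⁻¹ with hRdef
  -- invertibility facts
  have hdet1 : IsUnit Zp.det := (Matrix.isUnit_iff_isUnit_det _).mp hZ1
  have hdet2 : IsUnit Zt.det := (Matrix.isUnit_iff_isUnit_det _).mp hZ2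
  have hdetx : IsUnit Xt.det := (Matrix.isUnit_iff_isUnit_det _).mp hx
  have hPZp : P * Zp = 1 := Matrix.nonsing_inv_mul _ hdet1
  have hZtQ : Zt * Q = 1 := Matrix.mul_nonsing_inv _ hdet2
  have hRXt : R * Xt = 1 := Matrix.nonsing_inv_mul _ hdetx
  have hXtR : Xt * R = 1 := Matrix.mul_nonsing_inv _ hdetx
  -- key linear identity
  have key : Zp + Zt + (2 * y') • Xt = ((w + z) + y' * (2 * x)) • (1 : Matrix (Fin N) (Fin N) ℂ) := by
    rw [hZpdef, hZtdef, hXtdef, hAdef]; module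
  -- commutator identity
  have comm : Zp * Xt - Xt * Zp = 1 + V := by
    have hXZ : X * Z = Z * X + (1 + V) := by rw [← hrank]; abel
    rw [hZpdef, hXtdef, hAdef]
    simp only [add_mul, mul_add, sub_mul, mul_sub, Matrix.smul_mul, Matrix.mul_smul,
      mul_one, one_mul, smul_smul, smul_add, smul_sub, hXZ]
    module
  have hcomm : Zp * Xt = (1 + V) + Xt * Zp := sub_eq_iff_eq_add.mp comm
  have comm3 : R * Zp = R * R + R * V * R + Zp * R := by
    have h1 : R * (Zp * Xt) * R = R * ((1 + V) + Xt * Zp) * R := by rw [hcomm]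
    have e1 : R * (Zp * Xt) * R = (R * Zp) * (Xt * R) := by noncomm_ring
    have e2 : R * ((1 + V) + Xt * Zp) * R
        = R * R + R * V * R + (R * Xt) * (Zp * R) := by noncomm_ring
    rw [e1, e2, hXtR, hRXt, mul_one, one_mul] at h1
    exact h1
  -- matrix identity m2
  have m2 : P * R * Zp * Q = P * (R * R) * Q + P * R * V * (R * Q) + R * Q := by
    have e1 : P * R * Zp * Q = P * (R * Zp) * Q := by noncomm_ring
    rw [e1, comm3]
    have e2 : P * (R * R + R * V * R + Zp * R) * Q
        = P * (R * R) * Q + P * R * V * (R * Q) + (P * Zp) * (R * Q) := by noncomm_ring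
    rw [e2, hPZp, one_mul]
  -- matrix identity m1
  have m1 : ((w + z) + y' * (2 * x)) • (P * R * Q)
      = P * R * Zp * Q + P * R + (2 * y') • (P * Q) := by
    have e0 : ((w + z) + y' * (2 * x)) • (P * R * Q)
        = P * R * (((w + z) + y' * (2 * x)) • (1 : Matrix (Fin N) (Fin N) ℂ)) * Q := by
      simp [Matrix.mul_smul, Matrix.smul_mul]
    rw [e0, ← key]
    have e1 : P * R * (Zp + Zt + (2 * y') • Xt) * Q
        = P * R * Zp * Q + (P * R) * (Zt * Q) + (2 * y') • ((P * (R * Xt)) * Q) := by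
      simp only [mul_add, add_mul, Matrix.mul_smul, Matrix.smul_mul, mul_assoc]
    rw [e1, hZtQ, hRXt, mul_one, mul_one]
  -- scalar versions
  have h1 : ((w + z) + y' * (2 * x)) * (a ⬝ᵥ (P * R * Q).mulVec b)
      = a ⬝ᵥ (P * R * Zp * Q).mulVec b + a ⬝ᵥ (P * R).mulVec b
        + 2 * y' * (a ⬝ᵥ (P * Q).mulVec b) := by
    have := congrArg (fun M : Matrix (Fin N) (Fin N) ℂ => a ⬝ᵥ M.mulVec b) m1
    simpa [Matrix.add_mulVec, dotProduct_add, Matrix.smul_mulVec, dotProduct_smul,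
      smul_eq_mul] using this
  have h2 : a ⬝ᵥ (P * R * Zp * Q).mulVec b
      = a ⬝ᵥ (P * (R * R) * Q).mulVec b
        + (a ⬝ᵥ (P * R).mulVec b) * (a ⬝ᵥ (R * Q).mulVec b)
        + a ⬝ᵥ (R * Q).mulVec b := by
    have := congrArg (fun M : Matrix (Fin N) (Fin N) ℂ => a ⬝ᵥ M.mulVec b) m2
    simpa [Matrix.add_mulVec, dotProduct_add, hV, split_dot] using this
  -- derivative of the exponential factor
  have hE : HasDerivAt (fun ξ : ℂ => Complex.exp ((w + z) * ξ + (w ^ 2 + z ^ 2) * y + y' * ξ ^ 2))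
      (Complex.exp ((w + z) * x + (w ^ 2 + z ^ 2) * y + y' * x ^ 2) * ((w + z) + y' * (2 * x)))
      x := by
    have hpoly : HasDerivAt (fun ξ : ℂ => (w + z) * ξ + (w ^ 2 + z ^ 2) * y + y' * ξ ^ 2)
        ((w + z) + y' * (2 * x)) x := by
      have hsq : HasDerivAt (fun ξ : ℂ => ξ ^ 2) (2 * x) x := by
        simpa using hasDerivAt_pow 2 x
      have hlin : HasDerivAt (fun ξ : ℂ => (w + z) * ξ) (w + z) x := by
        simpa using (hasDerivAt_id x).const_mul (w + z)
      exact (hlin.add_const _).add (hsq.const_mul y')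
    exact hpoly.cexp
  -- derivative of the rational factor
  have hg : HasDerivAt (fun ξ : ℂ => a ⬝ᵥ (P * (ξ • (1 : Matrix (Fin N) (Fin N) ℂ) + A)⁻¹ * Q).mulVec b)
      (a ⬝ᵥ (P * (-(R * R)) * Q).mulVec b) x := by
    have hrw : ∀ M : Matrix (Fin N) (Fin N) ℂ,
        a ⬝ᵥ (P * M * Q).mulVec b = dotL (Matrix.vecMul a P) (Q.mulVec b) M := by
      intro M
      show _ = Matrix.vecMul a P ⬝ᵥ M.mulVec (Q.mulVec b)
      rw [← Matrix.mulVec_mulVec, ← Matrix.mulVec_mulVec, Matrix.dotProduct_mulVec]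
    have hmat := hasDerivAt_inv_matrix A x hx
    have hd := ((dotL (Matrix.vecMul a P) (Q.mulVec b)).toContinuousLinearMap.hasFDerivAt
        (x := R)).comp_hasDerivAt x hmat
    simp only [Function.comp, LinearMap.coe_toContinuousLinearMap'] at hd
    have : (fun ξ : ℂ => dotL (Matrix.vecMul a P) (Q.mulVec b)
        ((ξ • (1 : Matrix (Fin N) (Fin N) ℂ) + A)⁻¹))
        = fun ξ : ℂ => a ⬝ᵥ (P * (ξ • (1 : Matrix (Fin N) (Fin N) ℂ) + A)⁻¹ * Q).mulVec b := by
      funext ξ; rw [hrw]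
    have hd' : HasDerivAt (fun ξ : ℂ => dotL (Matrix.vecMul a P) (Q.mulVec b)
        ((ξ • (1 : Matrix (Fin N) (Fin N) ℂ) + A)⁻¹))
        (dotL (Matrix.vecMul a P) (Q.mulVec b) (-(R * R))) x := hd
    rw [this] at hd'
    rw [hrw]
    exact hd'
  -- assemble
  have hF := ((hμ x).mul_const
      (1 - 2 * y' * (a ⬝ᵥ (P * Q).mulVec b))).add (hE.mul hg)
  convert hF using 1
  rotate_right
  have h3 : a ⬝ᵥ (P * (-(R * R)) * Q).mulVec b = -(a ⬝ᵥ (P * (R * R) * Q).mulVec b) := by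
    simp [Matrix.neg_mulVec, dotProduct_neg]
  rw [h3]
  have hfold : (x • (1 : Matrix (Fin N) (Fin N) ℂ) + A)⁻¹ = R := by rw [hRdef, hXtdef]
  rw [hfold]
  linear_combination
    (-(Complex.exp ((w + z) * x + (w ^ 2 + z ^ 2) * y + y' * x ^ 2))) * h1
    - (Complex.exp ((w + z) * x + (w ^ 2 + z ^ 2) * y + y' * x ^ 2)) * h2
  all_goals rfl
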